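/- Let m ≥ 2 and suppose P, P' ∈ ℝ[X] satisfy P·D_m = Q_m and P'·D_{m+1} = Q_{m+1}. Let λ* be the largest real root of P (which satisfies 5 < λ* < 6). Then every real root μ of P' with φ₋(λ*) < μ < φ₊(λ*) satisfies μ > 2. -/

import Mathlib

open Function

noncomputable section

/-- The polynomial map `f(x) = x(5-x)`. -/
def f (x : ℝ) : ℝ := x * (5 - x)

/-- `l(x) = x - 6`. -/
def lf (x : ℝ) : ℝ := x - 6

/-- `s(x) = (2-x)(4-x)(5-x) - (14-3x)`. -/
def sf (x : ℝ) : ℝ := (2 - x) * (4 - x) * (5 - x) - (14 - 3 * x)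

/-- `r(x) = -2(2-x)(5-x)`. -/
def rf (x : ℝ) : ℝ := -2 * (2 - x) * (5 - x)

/-- The decreasing inverse branch of `f`. -/
def phim (x : ℝ) : ℝ := (5 - Real.sqrt (25 - 4 * x)) / 2

/-- The increasing inverse branch of `f`. -/
def phip (x : ℝ) : ℝ := (5 + Real.sqrt (25 - 4 * x)) / 2

/-- `q m` is the function `q_m` from the paper, meaningful for `m ≥ 2`
(the values at `m = 0, 1` are junk values `1`, never used in the statements). -/
def q : ℕ → ℝ → ℝ
  | 0, _ => 1
  | 1, _ => 1
  | 2, x => sf x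
  | 3, x => sf (f x) * sf x - rf (f x) * lf x
  | m + 4, x =>
      sf (f^[m + 2] x) * q (m + 3) x - rf (f^[m + 2] x) * lf (f^[m + 1] x) * q (m + 2) x

open Polynomial

/-- The polynomial `F = 5X - X²`. -/
def F : ℝ[X] := C 5 * X - X ^ 2

/-- `Fiter i` is the `i`-fold composition `F^{(i)}`, with `Fiter 0 = X`. -/
def Fiter : ℕ → ℝ[X]
  | 0 => X
  | i + 1 => F.comp (Fiter i)

/-- Polynomial version of `l`. -/
def Lp : ℝ[X] := X - C 6

/-- Polynomial version of `s`. -/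
def Sp : ℝ[X] := (C 2 - X) * (C 4 - X) * (C 5 - X) - (C 14 - C 3 * X)

/-- Polynomial version of `r`. -/
def Rp : ℝ[X] := -C 2 * (C 2 - X) * (C 5 - X)

/-- `Qp m` is the polynomial `Q_m`, satisfying `(Qp m).eval x = q_m x`,
defined by the same recursion as `q_m`; meaningful for `m ≥ 2`. -/
def Qp : ℕ → ℝ[X]
  | 0 => 1
  | 1 => 1
  | 2 => Sp
  | 3 => Sp.comp (Fiter 1) * Sp - Rp.comp (Fiter 1) * Lp
  | m + 4 =>
      Sp.comp (Fiter (m + 2)) * Qp (m + 3) -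
        Rp.comp (Fiter (m + 2)) * Lp.comp (Fiter (m + 1)) * Qp (m + 2)

/-- `Dp m = ∏_{i=0}^{m-3} (F^{(i)} - 2)`, with `Dp 2 = 1`. -/
def Dp (m : ℕ) : ℝ[X] := ∏ i ∈ Finset.range (m - 2), (Fiter i - C 2)

/-- `r_m = 2^m + 2^{m-2} - 2`. -/
def rm (m : ℕ) : ℕ := 2 ^ m + 2 ^ (m - 2) - 2

lemma qrec : ∀ (j : ℕ) (y : ℝ), q (j+3) y = sf (f^[j+1] y) * q (j+2) y - rf (f^[j+1] y) * lf (f^[j] y) * q (j+1) y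
  | 0, y => by simp [q]
  | (j+1), y => rfl

lemma f_nonpos {x : ℝ} (hx : x ≤ 0) : f x ≤ 0 := by unfold f; nlinarith

lemma sf_ge26 {w : ℝ} (hw : w ≤ 0) : (26:ℝ) ≤ sf w := by
  unfold sf; nlinarith [sq_nonneg w, mul_nonneg (sq_nonneg w) (neg_nonneg.2 hw)]

lemma qE : ∀ (k : ℕ) (y : ℝ), q (k+3) y = sf y * q (k+2) (f y) - rf (f y) * lf y * q (k+1) (f (f y))
  | 0, y => by simp [q]; ring
  | 1, y => by
    have h := qrec 1 y
    have i2 : f^[2] y = f (f y) := by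
      rw [show (2:ℕ) = 1+1 from rfl, Function.iterate_succ_apply, Function.iterate_one]
    rw [i2, Function.iterate_one] at h
    rw [h]; simp [q]; ring
  | (k+2), y => by
    have e1 := qE (k+1) y
    have e2 := qE k y
    have d0 := qrec (k+2) y
    have d1 := qrec (k+1) (f y)
    have d2 := qrec k (f (f y))
    have i1 : f^[k+2] (f y) = f^[k+3] y := by rw [← Function.iterate_succ_apply]
    have i2 : f^[k+1] (f y) = f^[k+2] y := by rw [← Function.iterate_succ_apply]
    have i3 : f^[k+1] (f (f y)) = f^[k+3] y := by
      rw [← Function.iterate_succ_apply, ← Function.iterate_succ_apply]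
    have i4 : f^[k] (f (f y)) = f^[k+2] y := by
      rw [← Function.iterate_succ_apply, ← Function.iterate_succ_apply]
    simp only [show k+1+1 = k+2 from rfl, show k+1+2 = k+3 from rfl, show k+1+3 = k+4 from rfl,
      show k+2+1 = k+3 from rfl, show k+2+2 = k+4 from rfl, show k+2+3 = k+5 from rfl] at e1 e2 d0 d1 d2 ⊢
    rw [i1, i2] at d1
    rw [i3, i4] at d2
    rw [d0, e1, e2, d1, d2]
    ring

lemma L1 {u : ℝ} (hu : u ≤ 0) : (13/5) * ((2-u)*(5-u)) ≤ sf u := by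
  unfold sf
  nlinarith [sq_nonneg u, mul_nonneg (sq_nonneg u) (neg_nonneg.2 hu), mul_nonneg (neg_nonneg.2 hu) (neg_nonneg.2 hu)]

lemma L2 {v : ℝ} (hv : v ≤ 0) : (13/3) * (6-v) ≤ sf v := by
  unfold sf
  nlinarith [sq_nonneg v, mul_nonneg (sq_nonneg v) (neg_nonneg.2 hv), mul_nonneg (neg_nonneg.2 hv) (neg_nonneg.2 hv)]

lemma L4 {w : ℝ} (hw : w ≤ -1) : 4*((2-w)*(5-w)) ≤ sf w := by
  unfold sf
  nlinarith [mul_nonneg (mul_nonneg (show (0:ℝ) ≤ -1-w by linarith) (show (0:ℝ) ≤ -1-w by linarith)) (show (0:ℝ) ≤ -1-w by linarith), sq_nonneg (-1-w)]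

lemma prod_ineq {u v : ℝ} (hu : u ≤ 0) (hv : v ≤ 0) : 4 * (rf u * lf v) ≤ sf u * sf v := by
  have h1 := L1 hu
  have h2 := L2 hv
  have ha : (0:ℝ) ≤ (2-u)*(5-u) := by nlinarith
  have hb : (0:ℝ) ≤ 6 - v := by linarith
  have h3 : (13/5) * ((2-u)*(5-u)) * ((13/3) * (6-v)) ≤ sf u * sf v :=
    mul_le_mul h1 h2 (by positivity) (le_trans (by positivity) h1)
  unfold rf lf
  nlinarith [mul_nonneg ha hb]

lemma posT : ∀ (k : ℕ) (w : ℝ), w ≤ 0 → 1 ≤ q k w ∧ (2 ≤ k → sf w * q (k-1) (f w) ≤ 2 * q k w)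
  | 0, w, _ => ⟨by simp [q], fun h => absurd h (by norm_num)⟩
  | 1, w, _ => ⟨by simp [q], fun h => absurd h (by norm_num)⟩
  | 2, w, hw => by
    have h := sf_ge26 hw
    constructor
    · show (1:ℝ) ≤ q 2 w; simp [q]; linarith
    · intro _
      show sf w * q 1 (f w) ≤ 2 * q 2 w
      simp [q]; linarith
  | (k+3), w, hw => by
    have hfw : f w ≤ 0 := f_nonpos hw
    have hffw : f (f w) ≤ 0 := f_nonpos hfw
    obtain ⟨hB1, hB2⟩ := posT (k+2) (f w) hfw
    obtain ⟨hC1, _⟩ := posT (k+1) (f (f w)) hffw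
    have hr := hB2 (by omega)
    simp only [show k+2-1 = k+1 from rfl] at hr
    have hE := qE k w
    have hp := prod_ineq hfw hw
    have hsw := sf_ge26 hw
    have hsu := sf_ge26 hfw
    have hrl : 0 ≤ rf (f w) * lf w := by
      unfold rf lf
      nlinarith [mul_nonneg (mul_nonneg (show (0:ℝ) ≤ 2 - f w by linarith) (show (0:ℝ) ≤ 5 - f w by linarith)) (show (0:ℝ) ≤ 6 - w by linarith)]
    have hC0 : (0:ℝ) ≤ q (k+1) (f (f w)) := by linarith
    have key := mul_le_mul_of_nonneg_right hp hC0
    -- key : 4*(rf (f w)*lf w) * C ≤ sf (f w)*sf w * C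
    have key2 : sf w * (sf (f w) * q (k+1) (f (f w))) ≤ sf w * (2 * q (k+2) (f w)) :=
      mul_le_mul_of_nonneg_left hr (by linarith)
    constructor
    · rw [hE]
      nlinarith [key, key2, mul_nonneg (show (0:ℝ) ≤ sf w - 26 by linarith) (show (0:ℝ) ≤ q (k+2) (f w) - 1 by linarith)]
    · intro _
      simp only [show k+3-1 = k+2 from rfl]
      rw [hE]
      nlinarith [key, key2]

lemma q_neg : ∀ (k : ℕ) (x : ℝ), 6 ≤ x → q (k+2) x < 0
  | 0, x, hx => by
    show q 2 x < 0
    simp only [q]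
    unfold sf
    nlinarith [mul_nonneg (mul_nonneg (show (0:ℝ) ≤ x-6 by linarith) (show (0:ℝ) ≤ x-6 by linarith)) (show (0:ℝ) ≤ x-6 by linarith), sq_nonneg (x-6)]
  | (k+1), x, hx => by
    simp only [show k+1+2 = k+3 from rfl]
    have hE := qE k x
    have hfx : f x ≤ -6 := by unfold f; nlinarith
    have hfx0 : f x ≤ 0 := by linarith
    have hffx0 : f (f x) ≤ 0 := f_nonpos hfx0
    obtain ⟨hB1, hB2⟩ := posT (k+2) (f x) hfx0
    have hC1 := (posT (k+1) (f (f x)) hffx0).1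
    have hr := hB2 (by omega)
    simp only [show k+2-1 = k+1 from rfl] at hr
    have hL1x := L1 hfx0
    have hL3 : sf x ≤ -4 - (20/13)*(x-6) := by
      unfold sf
      nlinarith [mul_nonneg (show (0:ℝ) ≤ x-6 by linarith) (show (0:ℝ) ≤ x^2-5*x+45/13 by nlinarith), sq_nonneg (x-6)]
    have hx6 : (0:ℝ) ≤ x - 6 := by linarith
    have hC0 : (0:ℝ) ≤ q (k+1) (f (f x)) := by linarith
    have hB0 : (0:ℝ) ≤ q (k+2) (f x) := by linarith
    -- t1 : ((2-f x)*(5-f x)) * C ≤ (5/13) * (sf (f x) * C)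
    have t1 := mul_le_mul_of_nonneg_right hL1x hC0
    -- t2 : (x-6)*(sf (f x) * C) ≤ (x-6)*(2*B)
    have t2 := mul_le_mul_of_nonneg_left hr hx6
    -- t3 : sf x * B ≤ (-4 - (20/13)*(x-6)) * B
    have t3 := mul_le_mul_of_nonneg_right hL3 hB0
    rw [hE]
    have hrfl : rf (f x) * lf x = -2*((2-f x)*(5-f x))*(x-6) := by unfold rf lf; ring
    nlinarith [t1, t2, t3, hB1, hrfl, mul_le_mul_of_nonneg_left t1 hx6]

lemma q_at_c : ∀ (k : ℕ), 0 < q (k+2) (26/5 : ℝ)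
  | 0 => by
    show 0 < q 2 (26/5:ℝ)
    simp only [q]
    unfold sf; norm_num
  | (k+1) => by
    simp only [show k+1+2 = k+3 from rfl]
    have hE := qE k (26/5 : ℝ)
    have hc : f (26/5 : ℝ) = -26/25 := by unfold f; norm_num
    rw [hc] at hE
    have h0 : (-26/25 : ℝ) ≤ 0 := by norm_num
    obtain ⟨hB1, hB2⟩ := posT (k+2) (-26/25 : ℝ) h0
    have hr := hB2 (by omega)
    simp only [show k+2-1 = k+1 from rfl] at hr
    have hC1 := (posT (k+1) (f (-26/25:ℝ)) (f_nonpos h0)).1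
    have n1 : sf (26/5:ℝ) = 104/125 := by unfold sf; norm_num
    have n2 : sf (-26/25:ℝ) = 1178476/15625 := by unfold sf; norm_num
    have n3 : rf (-26/25:ℝ) * lf (26/5:ℝ) = 91808/3125 := by unfold rf lf; norm_num
    rw [n1, n3] at hE
    rw [n2] at hr
    rw [hE]
    linarith

lemma Kstep (x : ℝ) (h1 : 7/5 ≤ x) (h2 : x ≤ 2) :
    2 - x ≤ 2*((x*(5-x)-2)*(x*(5-x)-5))*(6-x) - sf (x*(5-x)) * sf x - (6 - x*(5-x))*(-sf x) := by
  have hu : (0:ℝ) ≤ x - 7/5 := by linarith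
  have hu6 : x - 7/5 ≤ 3/5 := by linarith
  have hu2 : (x-7/5)^2 ≤ 9/25 := by nlinarith
  have p3 : (x-7/5)^3 ≤ (9/25)*(x-7/5) := by nlinarith [mul_le_mul_of_nonneg_left hu2 hu]
  have p6 : (x-7/5)^6 ≤ (3/5)*(x-7/5)^5 := by
    nlinarith [mul_le_mul_of_nonneg_left hu6 (pow_nonneg hu 5)]
  have p8 : (x-7/5)^8 ≤ (3/5)*(x-7/5)^7 := by
    nlinarith [mul_le_mul_of_nonneg_left hu6 (pow_nonneg hu 7)]
  have hK1 : (0:ℝ) ≤ 429059/390625 + (9211916/78125)*(x-7/5) + (1277093/15625)*(x-7/5)^2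
      - (775242/3125)*(x-7/5)^3 + (6356/125)*(x-7/5)^4 + (11372/125)*(x-7/5)^5
      - (1442/25)*(x-7/5)^6 + (64/5)*(x-7/5)^7 - (x-7/5)^8 := by
    nlinarith [p3, p6, p8, hu, pow_nonneg hu 2, pow_nonneg hu 4, pow_nonneg hu 5, pow_nonneg hu 7]
  have hfac : 2*((x*(5-x)-2)*(x*(5-x)-5))*(6-x) - sf (x*(5-x)) * sf x - (6 - x*(5-x))*(-sf x) - (2-x)
      = (2-x) * (429059/390625 + (9211916/78125)*(x-7/5) + (1277093/15625)*(x-7/5)^2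
      - (775242/3125)*(x-7/5)^3 + (6356/125)*(x-7/5)^4 + (11372/125)*(x-7/5)^5
      - (1442/25)*(x-7/5)^6 + (64/5)*(x-7/5)^7 - (x-7/5)^8) := by
    unfold sf; ring
  nlinarith [mul_nonneg (show (0:ℝ) ≤ 2-x by linarith) hK1, hfac]

set_option maxHeartbeats 1000000 in
lemma main_bound : ∀ (k : ℕ) (x : ℝ), x ≤ 2 → 26/5 < x*(5-x) → q (k+3) x ≤ -(2-x) := by
  intro k x hx2 hz
  have hfz : f x = x*(5-x) := rfl
  have hfw : f (x*(5-x)) = (x*(5-x))*(5-(x*(5-x))) := rfl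
  set z := x*(5-x) with hzdef
  set w := z*(5-z) with hwdef
  have hx1 : 7/5 ≤ x := by nlinarith [hz, hx2]
  have hz6 : z ≤ 6 := by rw [hzdef]; nlinarith
  have hw1 : w ≤ -1 := by rw [hwdef]; nlinarith [hz, hz6]
  have hw0 : w ≤ 0 := by linarith
  have hfw0 : f w ≤ 0 := f_nonpos hw0
  have hsx : sf x < 0 := by unfold sf; nlinarith [mul_nonneg (show (0:ℝ) ≤ x - 7/5 by linarith) (show (0:ℝ) ≤ 2 - x by linarith)]
  have hsw26 : (26:ℝ) ≤ sf w := sf_ge26 hw0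
  have hL4w := L4 hw1
  have hB1 : 1 ≤ q (k+1) w := (posT (k+1) w hw0).1
  have hb0 : (0:ℝ) ≤ q (k+1) w := by linarith
  have hE0 := qE k x
  rw [hfz, hfw] at hE0
  have hE : q (k+3) x = sf x * q (k+2) z - 2*((z-2)*(z-5))*(6-x) * q (k+1) w := by
    rw [hE0]; unfold rf lf; ring
  -- Aineq
  have hAineq : (sf w * sf z - 4*((2-w)*(5-w))*(6-z)) * q (k+1) w ≤ sf w * q (k+2) z := by
    cases k with
    | zero =>
      have hq2 : q 2 z = sf z := rfl
      have hq1 : q 1 w = (1:ℝ) := rfl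
      rw [hq2, hq1]
      nlinarith [mul_nonneg (mul_nonneg (show (0:ℝ) ≤ 2-w by linarith) (show (0:ℝ) ≤ 5-w by linarith)) (show (0:ℝ) ≤ 6-z by linarith)]
    | succ j =>
      simp only [show j+1+1 = j+2 from rfl, show j+1+2 = j+3 from rfl]
      have hEz := qE j z
      rw [hfw] at hEz
      have hEz' : q (j+3) z = sf z * q (j+2) w - 2*((2-w)*(5-w))*(6-z) * q (j+1) (f w) := by
        rw [hEz]; unfold rf lf; ring
      have hPT := (posT (j+2) w hw0).2 (by omega)
      simp only [show j+2-1 = j+1 from rfl] at hPT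
      have hC1 := (posT (j+1) (f w) hfw0).1
      have hC0 : (0:ℝ) ≤ q (j+1) (f w) := by linarith
      have hab : (0:ℝ) ≤ ((2-w)*(5-w))*(6-z) := by
        apply mul_nonneg (mul_nonneg (by linarith) (by linarith)) (by linarith)
      have ht := mul_le_mul_of_nonneg_left hPT (mul_nonneg hab (by norm_num : (0:ℝ) ≤ 2))
      -- ht : (ab*2) * (sf w * C) ≤ (ab*2) * (2*B)
      nlinarith [hEz', ht]
  -- final assembly
  have hsfwpos : (0:ℝ) < sf w := by linarith
  rw [← mul_le_mul_iff_right₀ hsfwpos, hE]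
  have hKK := Kstep x hx1 hx2
  rw [← hzdef] at hKK
  have h1 := mul_le_mul_of_nonpos_left hAineq (le_of_lt hsx)
  have h6z : (0:ℝ) ≤ 6 - z := by linarith
  have ht2 := mul_le_mul_of_nonneg_right hL4w (mul_nonneg h6z (mul_nonneg (show (0:ℝ) ≤ -sf x by linarith) hb0))
  -- ht2 : 4((2-w)(5-w)) * ((6-z)*((-sf x)*B)) ≤ sf w * ((6-z)*((-sf x)*B))
  have h3 := mul_le_mul_of_nonneg_right hKK (mul_nonneg (le_of_lt hsfwpos) hb0)
  -- h3 : (2-x) * (sf w * B) ≤ K * (sf w * B)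
  have h4 := mul_le_mul_of_nonneg_left hB1 (mul_nonneg (le_of_lt hsfwpos) (show (0:ℝ) ≤ 2-x by linarith))
  -- h4 : (sf w*(2-x)) * 1 ≤ (sf w*(2-x)) * B
  nlinarith [h1, ht2, h3, h4]

lemma evalFiter : ∀ (i : ℕ) (x : ℝ), (Fiter i).eval x = f^[i] x
  | 0, x => by simp [Fiter]
  | (i+1), x => by
    rw [Function.iterate_succ_apply']
    simp [Fiter, F, evalFiter i x, f]
    ring

lemma evalSp (y : ℝ) : Sp.eval y = sf y := by simp [Sp, sf]
lemma evalRp (y : ℝ) : Rp.eval y = rf y := by simp [Rp, rf]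
lemma evalLp (y : ℝ) : Lp.eval y = lf y := by simp [Lp, lf]

lemma evalQp : ∀ (k : ℕ) (x : ℝ), (Qp k).eval x = q k x
  | 0, x => by simp [Qp, q]
  | 1, x => by simp [Qp, q]
  | 2, x => by
    show Sp.eval x = q 2 x
    rw [evalSp]; rfl
  | 3, x => by
    show (Sp.comp (Fiter 1) * Sp - Rp.comp (Fiter 1) * Lp).eval x = q 3 x
    rw [eval_sub, eval_mul, eval_mul, eval_comp, eval_comp, evalFiter, evalSp, evalSp, evalRp, evalLp]
    simp [q, Function.iterate_one]
  | (m+4), x => by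
    have hq : q (m+4) x = sf (f^[m+2] x) * q (m+3) x - rf (f^[m+2] x) * lf (f^[m+1] x) * q (m+2) x := rfl
    have hQ : Qp (m+4) = Sp.comp (Fiter (m+2)) * Qp (m+3) -
        Rp.comp (Fiter (m+2)) * Lp.comp (Fiter (m+1)) * Qp (m+2) := rfl
    rw [hq, hQ, eval_sub, eval_mul, eval_mul, eval_mul, eval_comp, eval_comp, eval_comp,
      evalFiter, evalFiter, evalSp, evalRp, evalLp, evalQp (m+3) x, evalQp (m+2) x]

lemma evalDp (m : ℕ) (x : ℝ) : (Dp m).eval x = ∏ i ∈ Finset.range (m-2), (f^[i] x - 2) := by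
  rw [Dp, eval_prod]
  exact Finset.prod_congr rfl (fun i _ => by rw [eval_sub, eval_C, evalFiter])

lemma iter_neg_of_gt5 {x : ℝ} (hx : 5 < x) : ∀ j, f^[j+1] x < 0
  | 0 => by
    rw [Function.iterate_one]; unfold f; nlinarith
  | (j+1) => by
    rw [Function.iterate_succ_apply']
    have h := iter_neg_of_gt5 hx j
    have hstep : ∀ y : ℝ, y < 0 → f y < 0 := by intro y hy; unfold f; nlinarith
    exact hstep _ h

lemma Dp_ne_zero (m : ℕ) {x : ℝ} (hx : 5 < x) : (Dp m).eval x ≠ 0 := by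
  rw [evalDp]
  apply Finset.prod_ne_zero_iff.mpr
  intro i _
  cases i with
  | zero => simp only [Function.iterate_zero, id]; intro h; nlinarith [h]
  | succ j =>
    have := iter_neg_of_gt5 hx j
    intro h; nlinarith [h]

theorem statement_16 (m : ℕ) (hm : 2 ≤ m) (P P' : ℝ[X])
    (hP : P * Dp m = Qp m) (hP' : P' * Dp (m + 1) = Qp (m + 1))
    (lamstar : ℝ) (hroot : P.eval lamstar = 0)
    (hmax : ∀ x : ℝ, P.eval x = 0 → x ≤ lamstar) :
    (5 < lamstar ∧ lamstar < 6) ∧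
    ∀ μ : ℝ, P'.eval μ = 0 → phim lamstar < μ → μ < phip lamstar → 2 < μ := by
  obtain ⟨k, rfl⟩ : ∃ k, m = k + 2 := ⟨m - 2, by omega⟩
  -- part 1
  have hq6 : q (k+2) 6 < 0 := q_neg k 6 le_rfl
  have hqc : 0 < q (k+2) (26/5 : ℝ) := q_at_c k
  have hcont : ContinuousOn (fun x : ℝ => (Qp (k+2)).eval x) (Set.Icc (26/5) 6) :=
    (Qp (k+2)).continuous.continuousOn
  have hmem : (0:ℝ) ∈ Set.Ioo ((fun x : ℝ => (Qp (k+2)).eval x) 6) ((fun x : ℝ => (Qp (k+2)).eval x) (26/5)) := by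
    simp only [evalQp]
    exact ⟨hq6, hqc⟩
  obtain ⟨c, hc, hc0⟩ := intermediate_value_Ioo' (by norm_num : (26:ℝ)/5 ≤ 6) hcont hmem
  have hc0' : (Qp (k+2)).eval c = 0 := hc0
  have hPc : P.eval c = 0 := by
    have h1 : (P * Dp (k+2)).eval c = (Qp (k+2)).eval c := by rw [hP]
    rw [eval_mul, hc0'] at h1
    rcases mul_eq_zero.mp h1 with h | h
    · exact h
    · exact absurd h (Dp_ne_zero (k+2) (by linarith [hc.1]))
  have h52 : 26/5 < lamstar := lt_of_lt_of_le hc.1 (hmax c hPc)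
  have h5 : 5 < lamstar := by linarith
  have h6 : lamstar < 6 := by
    by_contra hcon
    push_neg at hcon
    have hneg : q (k+2) lamstar < 0 := q_neg k lamstar hcon
    have h1 : (P * Dp (k+2)).eval lamstar = (Qp (k+2)).eval lamstar := by rw [hP]
    rw [eval_mul, hroot, zero_mul] at h1
    rw [evalQp] at h1
    linarith [h1.symm]
  refine ⟨⟨h5, h6⟩, ?_⟩
  intro μ hμ hlo _
  by_contra hcon
  push_neg at hcon
  -- f μ > lamstar
  have hsq : Real.sqrt (25 - 4*lamstar) ^ 2 = 25 - 4*lamstar := Real.sq_sqrt (by linarith)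
  have hsqnn : 0 ≤ Real.sqrt (25 - 4*lamstar) := Real.sqrt_nonneg _
  have hlo' : (5 - Real.sqrt (25 - 4*lamstar))/2 < μ := by
    have : phim lamstar = (5 - Real.sqrt (25 - 4*lamstar))/2 := rfl
    linarith [this ▸ hlo]
  have hfmu : lamstar < μ*(5-μ) := by
    have hA : 0 < Real.sqrt (25 - 4*lamstar) + 5 - 2*μ := by linarith
    have hB : 0 < Real.sqrt (25 - 4*lamstar) - 5 + 2*μ := by linarith
    nlinarith [mul_pos hA hB, hsq]
  have h26 : 26/5 < μ*(5-μ) := by linarith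
  have hQμ : (Qp (k+3)).eval μ = 0 := by
    have h1 : (P' * Dp (k+2+1)).eval μ = (Qp (k+2+1)).eval μ := by rw [hP']
    simp only [show k+2+1 = k+3 from rfl] at h1
    rw [eval_mul, hμ, zero_mul] at h1
    exact h1.symm
  have hqμ : q (k+3) μ = 0 := by rw [← evalQp, hQμ]
  have hmb := main_bound k μ hcon h26
  rcases lt_or_eq_of_le hcon with hlt | heq
  · linarith
  · -- μ = 2 : multiplicity argument
    subst heq
    have hdvd1 : (X - C (2:ℝ)) ∣ P' := dvd_iff_isRoot.mpr hμ
    have hdvd2 : (X - C (2:ℝ)) ∣ Dp (k+2+1) := by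
      have h0mem : (0:ℕ) ∈ Finset.range (k+2+1-2) := by simp
      have := Finset.dvd_prod_of_mem (fun i => Fiter i - C (2:ℝ)) h0mem
      simpa [Dp, Fiter] using this
    obtain ⟨P₁, hP₁⟩ := hdvd1
    obtain ⟨D₁, hD₁⟩ := hdvd2
    have hQfac : Qp (k+3) = (X - C (2:ℝ))^2 * (P₁ * D₁) := by
      rw [show k+3 = k+2+1 from rfl, ← hP', hP₁, hD₁]; ring
    have hbd : ∀ x : ℝ, 3/2 < x → x < 2 → (2-x) * (P₁*D₁).eval x ≤ -1 := by
      intro x h1x h2x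
      have h26x : 26/5 < x*(5-x) := by nlinarith
      have hmb2 := main_bound k x (le_of_lt h2x) h26x
      have hqe : q (k+3) x = (x-2)^2 * (P₁*D₁).eval x := by
        rw [← evalQp, hQfac]
        simp [eval_pow]
      rw [hqe] at hmb2
      by_contra hcc
      push_neg at hcc
      nlinarith [hmb2, hcc]
    have htend : Filter.Tendsto (fun x : ℝ => (2-x) * (P₁*D₁).eval x) (nhdsWithin 2 (Set.Iio 2)) (nhds 0) := by
      have hcont2 : Continuous fun x : ℝ => (2-x) * (P₁*D₁).eval x :=
        (continuous_const.sub continuous_id).mul (P₁*D₁).continuous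
      have := hcont2.tendsto 2
      simp only [sub_self, zero_mul] at this
      exact tendsto_nhdsWithin_of_tendsto_nhds this
    have hev : ∀ᶠ x in nhdsWithin 2 (Set.Iio 2), (fun x : ℝ => (2-x) * (P₁*D₁).eval x) x ≤ -1 := by
      filter_upwards [Ioo_mem_nhdsLT_of_mem (show (2:ℝ) ∈ Set.Ioc (3/2) 2 by norm_num)] with x hx
      exact hbd x hx.1 hx.2
    have hfin : (0:ℝ) ≤ -1 := le_of_tendsto htend hev
    linarith
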